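/- Let G = (V,E) be a connected finite simple graph containing no cycle of length 4, no cycle of length 5, and no cycle of length 6 (as subgraphs, not necessarily induced), with L(G) ≠ ∅, and let w : V → ℝ be a weight function. Then G is w-well-covered if and only if both of the following hold: (i) for every vertex v ∈ V \ L(G) and every maximal independent set M of the subgraph of G induced by D(v), w(v) = w(M) (where w(∅) = 0); and (ii) w(x) = w(y) for every edge xy of G with both endpoints in L(G). -/

import Mathlib

namespace WC

variable {V : Type*}

/-- A set of vertices is independent if its elements are pairwise nonadjacent. -/
def IsIndep (G : SimpleGraph V) (S : Set V) : Prop :=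
  S.Pairwise fun a b => ¬ G.Adj a b

/-- A maximal independent set: independent and not properly contained in another
independent set. -/
def IsMaxIndep (G : SimpleGraph V) (S : Set V) : Prop :=
  IsIndep G S ∧ ∀ T : Set V, IsIndep G T → S ⊆ T → T = S

/-- A maximal independent set of the subgraph of `G` induced by `A`
(equivalently, a subset of `A`, independent in `G`, maximal among such). -/
def IsMaxIndepOn (G : SimpleGraph V) (A S : Set V) : Prop :=
  S ⊆ A ∧ IsIndep G S ∧ ∀ T : Set V, T ⊆ A → IsIndep G T → S ⊆ T → T = S

/-- The weight of a set of vertices: `w(S) = Σ_{s ∈ S} w(s)`. -/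
noncomputable def wsum (w : V → ℝ) (S : Set V) : ℝ := ∑ᶠ x ∈ S, w x

/-- `G` is `w`-well-covered if all maximal independent sets have the same weight. -/
def WWC (G : SimpleGraph V) (w : V → ℝ) : Prop :=
  ∀ S T : Set V, IsMaxIndep G S → IsMaxIndep G T → wsum w S = wsum w T

/-- `G` is well-covered if all maximal independent sets have the same cardinality. -/
def WellCovered (G : SimpleGraph V) : Prop :=
  ∀ S T : Set V, IsMaxIndep G S → IsMaxIndep G T → S.ncard = T.ncard

/-- `N(S)`, the set of vertices at distance exactly 1 from `S`. -/
def nbhd (G : SimpleGraph V) (S : Set V) : Set V :=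
  {x | x ∉ S ∧ ∃ s ∈ S, G.Adj x s}

/-- `N[S]`, the set of vertices at distance at most 1 from `S`. -/
def cnbhd (G : SimpleGraph V) (S : Set V) : Set V :=
  S ∪ {x | ∃ s ∈ S, G.Adj x s}

/-- `N₂(S)`, the set of vertices at distance exactly 2 from `S`. -/
def n2 (G : SimpleGraph V) (S : Set V) : Set V :=
  {x | x ∉ cnbhd G S ∧ ∃ y ∈ nbhd G S, G.Adj x y}

/-- `S` dominates `T` if `T ⊆ N[S]`. -/
def Dominates (G : SimpleGraph V) (S T : Set V) : Prop := T ⊆ cnbhd G S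

/-- `D(v) = N(v) \ N(N₂(v))`. -/
def dSet (G : SimpleGraph V) (v : V) : Set V :=
  G.neighborSet v \ nbhd G (n2 G {v})

/-- `L(G)`: vertices of degree 1, or of degree 2 lying on a triangle. -/
def lSet (G : SimpleGraph V) : Set V :=
  {v | (G.neighborSet v).ncard = 1 ∨
    ((G.neighborSet v).ncard = 2 ∧ ∃ a b, G.Adj v a ∧ G.Adj v b ∧ G.Adj a b)}

/-- `G` contains a cycle of length `k` as a (not necessarily induced) subgraph. -/
def HasCycleLen (G : SimpleGraph V) (k : ℕ) : Prop :=
  ∃ (u : V) (p : G.Walk u u), p.IsCycle ∧ p.length = k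

/-- A vertex is simplicial if its closed neighborhood induces a complete subgraph. -/
def Simplicial (G : SimpleGraph V) (v : V) : Prop :=
  ∀ a ∈ G.neighborSet v, ∀ b ∈ G.neighborSet v, a ≠ b → G.Adj a b

/-- `B` is an induced complete bipartite subgraph of `G` on (nonempty, disjoint)
parts `BX` and `BY`. -/
def IsCompleteBipartiteOn (G : SimpleGraph V) (BX BY : Set V) : Prop :=
  BX.Nonempty ∧ BY.Nonempty ∧ Disjoint BX BY ∧ IsIndep G BX ∧ IsIndep G BY ∧
    ∀ x ∈ BX, ∀ y ∈ BY, G.Adj x y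

/-- `B` (on parts `BX`, `BY`) is a generating subgraph of `G`: there is an
independent set `S` (a witness) such that `S ∪ BX` and `S ∪ BY` are both
maximal independent sets of `G`. -/
def IsGenerating (G : SimpleGraph V) (BX BY : Set V) : Prop :=
  ∃ S : Set V, IsIndep G S ∧ IsMaxIndep G (S ∪ BX) ∧ IsMaxIndep G (S ∪ BY)

/-- The edge `xy` is relating: there is an independent set `S` such that
`S ∪ {x}` and `S ∪ {y}` are both maximal independent sets of `G`. -/
def IsRelating (G : SimpleGraph V) (x y : V) : Prop :=
  G.Adj x y ∧ ∃ S : Set V, IsIndep G S ∧ IsMaxIndep G (S ∪ {x}) ∧ IsMaxIndep G (S ∪ {y})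


section Aux
variable {G : SimpleGraph V}


lemma indep_mono {S T : Set V} (h : IsIndep G T) (hS : S ⊆ T) : IsIndep G S :=
  Set.Pairwise.mono hS h

lemma isIndep_insert {S : Set V} {x : V} (hS : IsIndep G S) (hx : ∀ y ∈ S, ¬ G.Adj x y) :
    IsIndep G (insert x S) := by
  have hsymm : Symmetric (fun a b : V => ¬ G.Adj a b) := fun a b h hadj => h hadj.symm
  exact Set.pairwise_insert.2 ⟨hS, fun b hb _ => ⟨hx b hb, hsymm (hx b hb)⟩⟩

lemma isMaxIndep_iff {S : Set V} :
    IsMaxIndep G S ↔ IsIndep G S ∧ ∀ x, x ∉ S → ∃ y ∈ S, G.Adj x y := by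
  constructor
  · rintro ⟨hind, hmax⟩
    refine ⟨hind, fun x hx => ?_⟩
    by_contra hno
    push_neg at hno
    have h2 : insert x S = S :=
      hmax _ (isIndep_insert hind fun y hy => hno y hy) (Set.subset_insert x S)
    exact hx (h2 ▸ Set.mem_insert x S)
  · rintro ⟨hind, hdom⟩
    refine ⟨hind, fun T hT hST => ?_⟩
    refine Set.Subset.antisymm ?_ hST
    intro t ht
    by_contra hts
    obtain ⟨y, hyS, hadj⟩ := hdom t hts
    exact hT ht (hST hyS) (G.ne_of_adj hadj) hadj

lemma exists_max_indep_on [Fintype V] (G : SimpleGraph V) (Q A : Set V) (hA : IsIndep G A)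
    (hAQ : A ⊆ Q) :
    ∃ R : Set V, A ⊆ R ∧ R ⊆ Q ∧ IsIndep G R ∧ ∀ x ∈ Q, x ∉ R → ∃ y ∈ R, G.Adj x y := by
  classical
  set F : Set (Set V) := {R | A ⊆ R ∧ R ⊆ Q ∧ IsIndep G R} with hF
  have hfin : F.Finite := Set.toFinite F
  have hne : F.Nonempty := ⟨A, subset_rfl, hAQ, hA⟩
  obtain ⟨R, hRF, hmax⟩ := Set.Finite.exists_maximalFor id F hfin hne
  refine ⟨R, hRF.1, hRF.2.1, hRF.2.2, fun x hxQ hxR => ?_⟩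
  by_contra hno
  push_neg at hno
  have hins : insert x R ∈ F :=
    ⟨hRF.1.trans (Set.subset_insert _ _), Set.insert_subset hxQ hRF.2.1,
      isIndep_insert hRF.2.2 hno⟩
  have heq : R = insert x R :=
    Set.Subset.antisymm (Set.subset_insert x R) (hmax hins (Set.subset_insert x R))
  exact hxR (heq ▸ Set.mem_insert x R)

lemma wsum_union [Fintype V] {w : V → ℝ} {S T : Set V} (h : Disjoint S T) :
    wsum w (S ∪ T) = wsum w S + wsum w T :=
  finsum_mem_union h (Set.toFinite S) (Set.toFinite T)

lemma wsum_singleton {w : V → ℝ} {x : V} : wsum w {x} = w x := finsum_mem_singleton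

lemma wsum_empty {w : V → ℝ} : wsum w (∅ : Set V) = 0 := finsum_mem_empty

lemma wsum_insert [Fintype V] {w : V → ℝ} {x : V} {S : Set V} (hx : x ∉ S) :
    wsum w (insert x S) = w x + wsum w S := by
  rw [Set.insert_eq, wsum_union (Set.disjoint_singleton_left.2 hx), wsum_singleton]

-- cycle helpers
lemma no_c4 (h4 : ¬ HasCycleLen G 4) {a b x y : V} (hab : a ≠ b) (hxy : x ≠ y)
    (h1 : G.Adj a x) (h2 : G.Adj x b) (h3 : G.Adj a y) (h4' : G.Adj y b) : False := by
  apply h4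
  refine ⟨a, .cons h1 (.cons h2 (.cons h4'.symm (.cons h3.symm .nil))), ?_, rfl⟩
  have hax := h1.ne
  have hxb := h2.ne
  have hay := h3.ne
  have hyb := h4'.ne
  simp [SimpleGraph.Walk.isCycle_def, SimpleGraph.Walk.isTrail_def, List.nodup_cons,
    Sym2.eq_iff]
  aesop



lemma no_c5 (h5 : ¬ HasCycleLen G 5) {a b c d e : V}
    (hac : a ≠ c) (had : a ≠ d) (hbd : b ≠ d) (hbe : b ≠ e) (hce : c ≠ e)
    (h1 : G.Adj a b) (h2 : G.Adj b c) (h3 : G.Adj c d) (h4 : G.Adj d e) (h5' : G.Adj e a) :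
    False := by
  apply h5
  refine ⟨a, .cons h1 (.cons h2 (.cons h3 (.cons h4 (.cons h5' .nil)))), ?_, rfl⟩
  have n1 := h1.ne
  have n2 := h2.ne
  have n3 := h3.ne
  have n4 := h4.ne
  have n5 := h5'.ne
  simp [SimpleGraph.Walk.isCycle_def, SimpleGraph.Walk.isTrail_def, List.nodup_cons,
    Sym2.eq_iff]
  aesop

lemma no_c6 (h6 : ¬ HasCycleLen G 6) {a b c d e f : V}
    (hac : a ≠ c) (had : a ≠ d) (hae : a ≠ e) (hbd : b ≠ d) (hbe : b ≠ e) (hbf : b ≠ f)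
    (hce : c ≠ e) (hcf : c ≠ f) (hdf : d ≠ f)
    (h1 : G.Adj a b) (h2 : G.Adj b c) (h3 : G.Adj c d) (h4 : G.Adj d e) (h5 : G.Adj e f)
    (h6' : G.Adj f a) : False := by
  apply h6
  refine ⟨a, .cons h1 (.cons h2 (.cons h3 (.cons h4 (.cons h5 (.cons h6' .nil))))), ?_, rfl⟩
  have n1 := h1.ne
  have n2 := h2.ne
  have n3 := h3.ne
  have n4 := h4.ne
  have n5 := h5.ne
  have n6 := h6'.ne
  simp [SimpleGraph.Walk.isCycle_def, SimpleGraph.Walk.isTrail_def, List.nodup_cons,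
    Sym2.eq_iff]
  aesop



lemma n2_intro {v z y : V} (hzv : z ≠ v) (hnadj : ¬ G.Adj v z) (hvy : G.Adj v y)
    (hyz : G.Adj y z) : z ∈ n2 G {v} := by
  refine ⟨?_, y, ⟨?_, v, rfl, hvy.symm⟩, hyz.symm⟩
  · rintro (h | ⟨s, rfl, hadj⟩)
    · exact hzv h
    · exact hnadj hadj.symm
  · intro h
    rw [Set.mem_singleton_iff] at h
    subst h
    exact G.irrefl hvy

lemma n2_elim {v z : V} (hz : z ∈ n2 G {v}) :
    z ≠ v ∧ ¬ G.Adj v z ∧ ∃ y, G.Adj v y ∧ G.Adj y z := by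
  obtain ⟨hz1, y, ⟨hy1, s, rfl, hys⟩, hzy⟩ := hz
  refine ⟨?_, ?_, y, hys.symm, hzy.symm⟩
  · rintro rfl; exact hz1 (Or.inl rfl)
  · intro h; exact hz1 (Or.inr ⟨s, rfl, h.symm⟩)

lemma mem_dSet_iff {v u : V} :
    u ∈ dSet G v ↔ G.Adj v u ∧ ∀ z ∈ n2 G {v}, ¬ G.Adj u z := by
  constructor
  · rintro ⟨h1, h2⟩
    refine ⟨h1, fun z hz hadj => h2 ⟨?_, z, hz, hadj⟩⟩
    intro hmem
    exact (n2_elim hmem).2.1 h1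
  · rintro ⟨h1, h2⟩
    refine ⟨h1, ?_⟩
    rintro ⟨hu1, z, hz, huz⟩
    exact h2 z hz huz

lemma dSet_adj {v u : V} (h : u ∈ dSet G v) : G.Adj v u := (mem_dSet_iff.1 h).1

/-- a vertex adjacent to `v` but not in `D(v)` has a neighbor in `N₂(v)`. -/
lemma not_mem_dSet {v u : V} (hadj : G.Adj v u) (h : u ∉ dSet G v) :
    ∃ z ∈ n2 G {v}, G.Adj u z := by
  by_contra hno
  push_neg at hno
  exact h (mem_dSet_iff.2 ⟨hadj, hno⟩)

/-- all neighbors of a vertex of `D(v)` are in `N[v]`. -/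
lemma dSet_nbrs {v u q : V} (hu : u ∈ dSet G v) (hq : G.Adj u q) :
    q = v ∨ G.Adj v q := by
  rw [mem_dSet_iff] at hu
  by_contra hcon
  push_neg at hcon
  exact hu.2 q (n2_intro hcon.1 hcon.2 hu.1 hq) hq

-- cnbhd lemmas
lemma subset_cnbhd {S : Set V} : S ⊆ cnbhd G S := Set.subset_union_left

lemma mem_cnbhd_of_adj {S : Set V} {x s : V} (hs : s ∈ S) (h : G.Adj x s) :
    x ∈ cnbhd G S := Or.inr ⟨s, hs, h⟩

lemma not_mem_cnbhd {S : Set V} {x : V} (h : x ∉ cnbhd G S) :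
    x ∉ S ∧ ∀ s ∈ S, ¬ G.Adj x s := by
  constructor
  · exact fun hx => h (Or.inl hx)
  · exact fun s hs hadj => h (Or.inr ⟨s, hs, hadj⟩)

/-- The core witness-construction lemma. -/
lemma gen_lemma [Fintype V] {A B P : Set V}
    (hA : IsIndep G A) (hB : IsIndep G B) (hP : IsIndep G P)
    (hPAB : ∀ p ∈ P, p ∉ cnbhd G A ∧ p ∉ cnbhd G B)
    (hcovB : ∀ x ∈ cnbhd G B, x ∉ cnbhd G A → ∃ p ∈ P, G.Adj x p)
    (hcovA : ∀ x ∈ cnbhd G A, x ∉ cnbhd G B → ∃ p ∈ P, G.Adj x p) :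
    ∃ W : Set V, Disjoint W (cnbhd G A ∪ cnbhd G B) ∧
      IsMaxIndep G (W ∪ A) ∧ IsMaxIndep G (W ∪ B) := by
  classical
  set Q : Set V := (cnbhd G A ∪ cnbhd G B ∪ cnbhd G P)ᶜ with hQ
  obtain ⟨R, -, hRQ, hRind, hRdom⟩ :=
    exists_max_indep_on G Q ∅ (Set.pairwise_empty _) (Set.empty_subset _)
  have hRfacts : ∀ r ∈ R, r ∉ cnbhd G A ∧ r ∉ cnbhd G B ∧ r ∉ cnbhd G P := by
    intro r hr
    have := hRQ hr
    rw [hQ, Set.mem_compl_iff, Set.mem_union, Set.mem_union] at this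
    push_neg at this
    exact ⟨this.1.1, this.1.2, this.2⟩
  refine ⟨P ∪ R, ?_, ?_, ?_⟩
  · rw [Set.disjoint_union_left]
    constructor
    · rw [Set.disjoint_left]
      intro p hp hmem
      rcases hmem with h | h
      · exact (hPAB p hp).1 h
      · exact (hPAB p hp).2 h
    · rw [Set.disjoint_left]
      intro r hr hmem
      rcases hmem with h | h
      · exact (hRfacts r hr).1 h
      · exact (hRfacts r hr).2.1 h
  all_goals rw [isMaxIndep_iff]
  · constructor
    · -- independence of P ∪ R ∪ A
      intro x hx y hy hne
      have sym : ∀ x y : V, (x ∈ P ∪ R → y ∈ A → ¬ G.Adj x y) := by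
        intro x y hx hy hadj
        rcases hx with hx | hx
        · exact (not_mem_cnbhd (hPAB x hx).1).2 y hy hadj
        · exact (not_mem_cnbhd (hRfacts x hx).1).2 y hy hadj
      have symP : ∀ x y : V, (x ∈ R → y ∈ P → ¬ G.Adj x y) := by
        intro x y hx hy hadj
        exact (not_mem_cnbhd (hRfacts x hx).2.2).2 y hy hadj
      rcases hx with (hx | hx) | hx <;> rcases hy with (hy | hy) | hy
      · exact hP hx hy hne
      · exact fun h => symP y x hy hx h.symm
      · exact sym x y (Or.inl hx) hy
      · exact symP x y hx hy
      · exact hRind hx hy hne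
      · exact sym x y (Or.inr hx) hy
      · exact fun h => sym y x (Or.inl hy) hx h.symm
      · exact fun h => sym y x (Or.inr hy) hx h.symm
      · exact hA hx hy hne
    · -- domination
      intro x hxnot
      by_cases hxA : x ∈ cnbhd G A
      · rcases hxA with hxA | ⟨a, ha, hadj⟩
        · exact absurd (Or.inr hxA) hxnot
        · exact ⟨a, Or.inr ha, hadj⟩
      by_cases hxB : x ∈ cnbhd G B
      · obtain ⟨p, hp, hadj⟩ := hcovB x hxB hxA
        exact ⟨p, Or.inl (Or.inl hp), hadj⟩
      by_cases hxP : x ∈ cnbhd G P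
      · rcases hxP with hxP | ⟨p, hp, hadj⟩
        · exact absurd (Or.inl (Or.inl hxP)) hxnot
        · exact ⟨p, Or.inl (Or.inl hp), hadj⟩
      · have hxQ : x ∈ Q := by
          rw [hQ, Set.mem_compl_iff]
          rintro ((h | h) | h) <;> [exact hxA h; exact hxB h; exact hxP h]
        have hxR : x ∉ R := fun h => hxnot (Or.inl (Or.inr h))
        obtain ⟨y, hy, hadj⟩ := hRdom x hxQ hxR
        exact ⟨y, Or.inl (Or.inr hy), hadj⟩
  · constructor
    · intro x hx y hy hne
      have sym : ∀ x y : V, (x ∈ P ∪ R → y ∈ B → ¬ G.Adj x y) := by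
        intro x y hx hy hadj
        rcases hx with hx | hx
        · exact (not_mem_cnbhd (hPAB x hx).2).2 y hy hadj
        · exact (not_mem_cnbhd (hRfacts x hx).2.1).2 y hy hadj
      have symP : ∀ x y : V, (x ∈ R → y ∈ P → ¬ G.Adj x y) := by
        intro x y hx hy hadj
        exact (not_mem_cnbhd (hRfacts x hx).2.2).2 y hy hadj
      rcases hx with (hx | hx) | hx <;> rcases hy with (hy | hy) | hy
      · exact hP hx hy hne
      · exact fun h => symP y x hy hx h.symm
      · exact sym x y (Or.inl hx) hy
      · exact symP x y hx hy
      · exact hRind hx hy hne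
      · exact sym x y (Or.inr hx) hy
      · exact fun h => sym y x (Or.inl hy) hx h.symm
      · exact fun h => sym y x (Or.inr hy) hx h.symm
      · exact hB hx hy hne
    · intro x hxnot
      by_cases hxB : x ∈ cnbhd G B
      · rcases hxB with hxB | ⟨b, hb, hadj⟩
        · exact absurd (Or.inr hxB) hxnot
        · exact ⟨b, Or.inr hb, hadj⟩
      by_cases hxA : x ∈ cnbhd G A
      · obtain ⟨p, hp, hadj⟩ := hcovA x hxA hxB
        exact ⟨p, Or.inl (Or.inl hp), hadj⟩
      by_cases hxP : x ∈ cnbhd G P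
      · rcases hxP with hxP | ⟨p, hp, hadj⟩
        · exact absurd (Or.inl (Or.inl hxP)) hxnot
        · exact ⟨p, Or.inl (Or.inl hp), hadj⟩
      · have hxQ : x ∈ Q := by
          rw [hQ, Set.mem_compl_iff]
          rintro ((h | h) | h) <;> [exact hxA h; exact hxB h; exact hxP h]
        have hxR : x ∉ R := fun h => hxnot (Or.inl (Or.inr h))
        obtain ⟨y, hy, hadj⟩ := hRdom x hxQ hxR
        exact ⟨y, Or.inl (Or.inr hy), hadj⟩


lemma mem_cnbhd_singleton {x c : V} : x ∈ cnbhd G {c} ↔ x = c ∨ G.Adj x c := by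
  constructor
  · rintro (h | ⟨s, rfl, h⟩)
    · exact Or.inl h
    · exact Or.inr h
  · rintro (rfl | h)
    · exact Or.inl rfl
    · exact Or.inr ⟨c, rfl, h⟩

lemma star_construction [Fintype V] (h4 : ¬ HasCycleLen G 4) (h5 : ¬ HasCycleLen G 5)
    {c : V} {M : Set V} (hM : IsMaxIndepOn G (dSet G c) M) (hMne : M.Nonempty) :
    ∃ W : Set V, Disjoint W (cnbhd G {c} ∪ cnbhd G M) ∧
      IsMaxIndep G (W ∪ {c}) ∧ IsMaxIndep G (W ∪ M) := by
  classical
  obtain ⟨hMD, hMind, hMmax⟩ := hM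
  set X : Set V := {x | G.Adj c x ∧ x ∉ cnbhd G M} with hX
  have hXz : ∀ x ∈ X, ∃ z, z ∈ n2 G {c} ∧ G.Adj x z := by
    intro x hx
    apply not_mem_dSet hx.1
    intro hxD
    have heq : insert x M = M := by
      refine hMmax _ (Set.insert_subset hxD hMD)
        (isIndep_insert hMind fun y hy => (not_mem_cnbhd hx.2).2 y hy) (Set.subset_insert _ _)
    exact (not_mem_cnbhd hx.2).1 (heq ▸ Set.mem_insert x M)
  choose! f hf1 hf2 using hXz
  have huniq : ∀ x ∈ X, ∀ y, G.Adj c y → G.Adj y (f x) → y = x := by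
    intro x hx y hcy hyz
    by_contra hne
    obtain ⟨hzc, hznadj, -⟩ := n2_elim (hf1 x hx)
    exact no_c4 h4 (Ne.symm hzc) (fun h => hne h.symm) hx.1 (hf2 x hx) hcy hyz
  have hPnotc : ∀ x ∈ X, f x ∉ cnbhd G {c} := by
    intro x hx
    obtain ⟨hzc, hznadj, -⟩ := n2_elim (hf1 x hx)
    rw [mem_cnbhd_singleton]
    rintro (h | h)
    · exact hzc h
    · exact hznadj h.symm
  have hPnotM : ∀ x ∈ X, f x ∉ cnbhd G M := by
    intro x hx hmem
    rcases hmem with hm | ⟨m, hm, hadj⟩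
    · exact (n2_elim (hf1 x hx)).2.1 (dSet_adj (hMD hm))
    · have hmx := huniq x hx m (dSet_adj (hMD hm)) hadj.symm
      subst hmx
      exact hx.2 (subset_cnbhd hm)
  have hPind : IsIndep G (f '' X) := by
    rintro p ⟨x, hx, rfl⟩ q ⟨y, hy, rfl⟩ hne hadj
    have hxy : x ≠ y := by rintro rfl; exact hne rfl
    obtain ⟨hfxc, hfxn, -⟩ := n2_elim (hf1 x hx)
    obtain ⟨hfyc, hfyn, -⟩ := n2_elim (hf1 y hy)
    refine no_c5 h5 (Ne.symm hfxc) (Ne.symm hfyc) ?_ hxy ?_ hx.1 (hf2 x hx) hadj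
      ((hf2 y hy).symm) hy.1.symm
    · rintro rfl; exact hfyn hx.1
    · intro h; subst h; exact hfxn hy.1
  refine gen_lemma (Set.pairwise_singleton c _) hMind hPind ?_ ?_ ?_
  · rintro p ⟨x, hx, rfl⟩
    exact ⟨hPnotc x hx, hPnotM x hx⟩
  · intro x hxM hxc
    exfalso
    rcases hxM with hm | ⟨m, hm, hadj⟩
    · exact hxc (mem_cnbhd_singleton.2 (Or.inr (dSet_adj (hMD hm)).symm))
    · rcases dSet_nbrs (hMD hm) hadj.symm with h | h
      · exact hxc (mem_cnbhd_singleton.2 (Or.inl h))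
      · exact hxc (mem_cnbhd_singleton.2 (Or.inr h.symm))
  · intro x hxc hxM
    rcases mem_cnbhd_singleton.1 hxc with rfl | h
    · exfalso
      obtain ⟨m, hm⟩ := hMne
      exact hxM (Or.inr ⟨m, hm, dSet_adj (hMD hm)⟩)
    · have hxX : x ∈ X := ⟨h.symm, hxM⟩
      exact ⟨f x, ⟨x, hxX, rfl⟩, hf2 x hxX⟩

/-- standard facts about a family of distance-2 private neighbors of a vertex `c`. -/
lemma zfam (h4 : ¬ HasCycleLen G 4) (h5 : ¬ HasCycleLen G 5) {c : V} {X : Set V}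
    (hXadj : ∀ x ∈ X, G.Adj c x) {f : V → V}
    (hf1 : ∀ x ∈ X, f x ∈ n2 G {c}) (hf2 : ∀ x ∈ X, G.Adj x (f x)) :
    (∀ x ∈ X, ∀ y, G.Adj c y → G.Adj y (f x) → y = x) ∧
    (∀ x ∈ X, f x ∉ cnbhd G {c}) ∧ IsIndep G (f '' X) := by
  have huniq : ∀ x ∈ X, ∀ y, G.Adj c y → G.Adj y (f x) → y = x := by
    intro x hx y hcy hyz
    by_contra hne
    obtain ⟨hzc, hznadj, -⟩ := n2_elim (hf1 x hx)
    exact no_c4 h4 (Ne.symm hzc) (fun h => hne h.symm) (hXadj x hx) (hf2 x hx) hcy hyz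
  refine ⟨huniq, ?_, ?_⟩
  · intro x hx
    obtain ⟨hzc, hznadj, -⟩ := n2_elim (hf1 x hx)
    rw [mem_cnbhd_singleton]
    rintro (h | h)
    · exact hzc h
    · exact hznadj h.symm
  · rintro p ⟨x, hx, rfl⟩ q ⟨y, hy, rfl⟩ hne hadj
    have hxy : x ≠ y := by rintro rfl; exact hne rfl
    obtain ⟨hfxc, hfxn, -⟩ := n2_elim (hf1 x hx)
    obtain ⟨hfyc, hfyn, -⟩ := n2_elim (hf1 y hy)
    refine no_c5 h5 (Ne.symm hfxc) (Ne.symm hfyc) ?_ hxy ?_ (hXadj x hx) (hf2 x hx) hadj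
      ((hf2 y hy).symm) (hXadj y hy).symm
    · intro h; exact hfyn (h ▸ hXadj x hx)
    · intro h; exact hfxn (h.symm ▸ hXadj y hy)

/-- An edge between two vertices with empty `D`-sets is relating. -/
lemma relating_construction [Fintype V] (h4 : ¬ HasCycleLen G 4) (h5 : ¬ HasCycleLen G 5)
    (h6 : ¬ HasCycleLen G 6) {v u : V} (hadj : G.Adj v u)
    (hDv : dSet G v = ∅) (hDu : dSet G u = ∅) :
    ∃ W : Set V, Disjoint W (cnbhd G {v} ∪ cnbhd G {u}) ∧
      IsMaxIndep G (W ∪ {v}) ∧ IsMaxIndep G (W ∪ {u}) := by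
  classical
  set X1 : Set V := {a | G.Adj v a ∧ a ∉ cnbhd G {u}} with hX1
  set X2 : Set V := {b | G.Adj u b ∧ b ∉ cnbhd G {v}} with hX2
  have hXz1 : ∀ a ∈ X1, ∃ z, z ∈ n2 G {v} ∧ G.Adj a z := by
    intro a ha
    apply not_mem_dSet ha.1
    intro hD; rw [hDv] at hD; exact hD
  have hXz2 : ∀ b ∈ X2, ∃ z, z ∈ n2 G {u} ∧ G.Adj b z := by
    intro b hb
    apply not_mem_dSet hb.1
    intro hD; rw [hDu] at hD; exact hD
  choose! f hf1 hf2 using hXz1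
  choose! g hg1 hg2 using hXz2
  obtain ⟨funiq, fnotv, find⟩ := zfam h4 h5 (fun a (ha : a ∈ X1) => ha.1) hf1 hf2
  obtain ⟨guniq, gnotu, gind⟩ := zfam h4 h5 (fun b (hb : b ∈ X2) => hb.1) hg1 hg2
  have fnotu : ∀ a ∈ X1, f a ∉ cnbhd G {u} := by
    intro a ha hmem
    rcases mem_cnbhd_singleton.1 hmem with h | h
    · exact (n2_elim (hf1 a ha)).2.1 (h ▸ hadj)
    · have hua := funiq a ha u hadj h.symm
      exact ha.2 (mem_cnbhd_singleton.2 (Or.inl hua.symm))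
  have gnotv : ∀ b ∈ X2, g b ∉ cnbhd G {v} := by
    intro b hb hmem
    rcases mem_cnbhd_singleton.1 hmem with h | h
    · exact (n2_elim (hg1 b hb)).2.1 (h ▸ hadj.symm)
    · have hvb := guniq b hb v hadj.symm h.symm
      exact hb.2 (mem_cnbhd_singleton.2 (Or.inl hvb.symm))
  have hPind : IsIndep G (f '' X1 ∪ g '' X2) := by
    have cross : ∀ a ∈ X1, ∀ b ∈ X2, ¬ G.Adj (f a) (g b) := by
      intro a ha b hb hadj'
      -- C6 : v a (f a) (g b) b u
      refine no_c6 h6 ?_ ?_ ?_ ?_ ?_ ?_ ?_ ?_ ?_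
        ha.1 (hf2 a ha) hadj' ((hg2 b hb).symm) hb.1.symm hadj.symm
      · rintro rfl; exact (n2_elim (hf1 a ha)).1 rfl
      · rintro rfl; exact (n2_elim (hg1 b hb)).2.1 hadj.symm
      · rintro rfl; exact hb.2 (mem_cnbhd_singleton.2 (Or.inl rfl))
      · intro h; subst h; exact gnotv b hb (mem_cnbhd_singleton.2 (Or.inr ha.1.symm))
      · rintro rfl; exact ha.2 (mem_cnbhd_singleton.2 (Or.inr hb.1.symm))
      · rintro rfl; exact ha.2 (mem_cnbhd_singleton.2 (Or.inl rfl))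
      · intro h; subst h; exact fnotu a ha (mem_cnbhd_singleton.2 (Or.inr hb.1.symm))
      · intro h; subst h; exact fnotu a ha (mem_cnbhd_singleton.2 (Or.inl rfl))
      · intro h; subst h; exact (n2_elim (hg1 b hb)).1 rfl
    rintro p (⟨a, ha, rfl⟩ | ⟨b, hb, rfl⟩) q (⟨a', ha', rfl⟩ | ⟨b', hb', rfl⟩) hne
    · exact find ⟨a, ha, rfl⟩ ⟨a', ha', rfl⟩ hne
    · exact cross a ha b' hb'
    · exact fun h => cross a' ha' b hb h.symm
    · exact gind ⟨b, hb, rfl⟩ ⟨b', hb', rfl⟩ hne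
  refine gen_lemma (Set.pairwise_singleton v _) (Set.pairwise_singleton u _) hPind ?_ ?_ ?_
  · rintro p (⟨a, ha, rfl⟩ | ⟨b, hb, rfl⟩)
    · exact ⟨fnotv a ha, fnotu a ha⟩
    · exact ⟨gnotv b hb, gnotu b hb⟩
  · intro x hxu hxv
    rcases mem_cnbhd_singleton.1 hxu with rfl | h
    · exact absurd (mem_cnbhd_singleton.2 (Or.inr hadj.symm)) hxv
    · have hxX : x ∈ X2 := ⟨h.symm, hxv⟩
      exact ⟨g x, Or.inr ⟨x, hxX, rfl⟩, hg2 x hxX⟩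
  · intro x hxv hxu
    rcases mem_cnbhd_singleton.1 hxv with rfl | h
    · exact absurd (mem_cnbhd_singleton.2 (Or.inr hadj)) hxu
    · have hxX : x ∈ X1 := ⟨h.symm, hxu⟩
      exact ⟨f x, Or.inl ⟨x, hxX, rfl⟩, hf2 x hxX⟩

lemma cnbhd_mono {S T : Set V} (h : S ⊆ T) : cnbhd G S ⊆ cnbhd G T := by
  rintro x (hx | ⟨s, hs, hadj⟩)
  · exact Or.inl (h hx)
  · exact Or.inr ⟨s, h hs, hadj⟩

/-- the two-sided star construction: centre `u`, other side `Y ∪ {v}`. -/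
lemma star1_construction [Fintype V] (h4 : ¬ HasCycleLen G 4) (h5 : ¬ HasCycleLen G 5)
    (h6 : ¬ HasCycleLen G 6) {v u : V} (hadj : G.Adj v u) (hDv : dSet G v = ∅)
    {Y : Set V} (hY : IsMaxIndepOn G (dSet G u) Y) (hYne : Y.Nonempty)
    (hYv : ∀ y ∈ Y, ¬ G.Adj v y ∧ v ≠ y) :
    ∃ W : Set V, Disjoint W (cnbhd G {u} ∪ cnbhd G (insert v Y)) ∧
      IsMaxIndep G (W ∪ {u}) ∧ IsMaxIndep G (W ∪ insert v Y) := by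
  classical
  obtain ⟨hYD, hYind, hYmax⟩ := hY
  set B : Set V := insert v Y with hB
  have hBadj : ∀ b ∈ B, G.Adj u b := by
    rintro b (rfl | hb)
    · exact hadj.symm
    · exact dSet_adj (hYD hb)
  have hBind : IsIndep G B := isIndep_insert hYind fun y hy => (hYv y hy).1
  set X1 : Set V := {x | G.Adj u x ∧ x ∉ cnbhd G B} with hX1
  set X2 : Set V := {q | G.Adj v q ∧ q ∉ cnbhd G {u}} with hX2
  have hXz1 : ∀ x ∈ X1, ∃ z, z ∈ n2 G {u} ∧ G.Adj x z := by
    intro x hx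
    apply not_mem_dSet hx.1
    intro hxD
    have hxY : x ∉ cnbhd G Y := fun h => hx.2 (cnbhd_mono (Set.subset_insert v Y) h)
    have heq : insert x Y = Y := by
      refine hYmax _ (Set.insert_subset hxD hYD)
        (isIndep_insert hYind fun y hy => (not_mem_cnbhd hxY).2 y hy) (Set.subset_insert _ _)
    exact (not_mem_cnbhd hxY).1 (heq ▸ Set.mem_insert x Y)
  have hXz2 : ∀ q ∈ X2, ∃ z, z ∈ n2 G {v} ∧ G.Adj q z := by
    intro q hq
    apply not_mem_dSet hq.1
    intro hD; rw [hDv] at hD; exact hD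
  choose! f hf1 hf2 using hXz1
  choose! g hg1 hg2 using hXz2
  obtain ⟨funiq, fnotu, find⟩ := zfam h4 h5 (fun x (hx : x ∈ X1) => hx.1) hf1 hf2
  obtain ⟨guniq, gnotv, gind⟩ := zfam h4 h5 (fun q (hq : q ∈ X2) => hq.1) hg1 hg2
  have fnotB : ∀ x ∈ X1, f x ∉ cnbhd G B := by
    intro x hx hmem
    rcases hmem with hm | ⟨b, hb, hadj'⟩
    · exact (n2_elim (hf1 x hx)).2.1 (hBadj _ hm)
    · have hbx := funiq x hx b (hBadj b hb) hadj'.symm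
      subst hbx
      exact hx.2 (subset_cnbhd hb)
  have gnotu' : ∀ q ∈ X2, g q ∉ cnbhd G {u} := by
    intro q hq hmem
    rcases mem_cnbhd_singleton.1 hmem with h | h
    · exact (n2_elim (hg1 q hq)).2.1 (h ▸ hadj)
    · have huq := guniq q hq u hadj h.symm
      exact hq.2 (mem_cnbhd_singleton.2 (Or.inl huq.symm))
  have gnotB : ∀ q ∈ X2, g q ∉ cnbhd G B := by
    intro q hq hmem
    rcases hmem with hm | ⟨b, hb, hadj'⟩
    · rcases hm with h | hm
      · exact (n2_elim (hg1 q hq)).1 h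
      · exact gnotu' q hq (mem_cnbhd_singleton.2 (Or.inr (hBadj _ (Or.inr hm)).symm))
    · rcases hb with rfl | hb
      · exact (n2_elim (hg1 q hq)).2.1 hadj'.symm
      · rcases dSet_nbrs (hYD hb) hadj'.symm with h | h
        · exact gnotu' q hq (mem_cnbhd_singleton.2 (Or.inl h))
        · exact gnotu' q hq (mem_cnbhd_singleton.2 (Or.inr h.symm))
  have hPind : IsIndep G (f '' X1 ∪ g '' X2) := by
    have cross : ∀ x ∈ X1, ∀ q ∈ X2, ¬ G.Adj (f x) (g q) := by
      intro x hx q hq hadj'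
      -- C6 : v u x (f x) (g q) q
      refine no_c6 h6 ?_ ?_ ?_ ?_ ?_ ?_ ?_ ?_ ?_
        hadj hx.1 (hf2 x hx) hadj' ((hg2 q hq).symm) hq.1.symm
      · rintro rfl; exact hx.2 (subset_cnbhd (Set.mem_insert v Y))
      · rintro rfl; exact (n2_elim (hf1 x hx)).2.1 hadj.symm
      · rintro rfl; exact (n2_elim (hg1 q hq)).1 rfl
      · rintro rfl; exact (n2_elim (hf1 x hx)).1 rfl
      · rintro rfl; exact gnotu' q hq (mem_cnbhd_singleton.2 (Or.inl rfl))
      · rintro rfl; exact hq.2 (mem_cnbhd_singleton.2 (Or.inl rfl))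
      · intro h; subst h; exact gnotu' q hq (mem_cnbhd_singleton.2 (Or.inr hx.1.symm))
      · intro h; subst h; exact hq.2 (mem_cnbhd_singleton.2 (Or.inr hx.1.symm))
      · intro h; subst h; exact fnotB x hx (Or.inr ⟨v, Set.mem_insert v Y, hq.1.symm⟩)
    rintro p (⟨a, ha, rfl⟩ | ⟨b, hb, rfl⟩) q' (⟨a', ha', rfl⟩ | ⟨b', hb', rfl⟩) hne
    · exact find ⟨a, ha, rfl⟩ ⟨a', ha', rfl⟩ hne
    · exact cross a ha b' hb'
    · exact fun h => cross a' ha' b hb h.symm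
    · exact gind ⟨b, hb, rfl⟩ ⟨b', hb', rfl⟩ hne
  refine gen_lemma (Set.pairwise_singleton u _) hBind hPind ?_ ?_ ?_
  · rintro p (⟨a, ha, rfl⟩ | ⟨b, hb, rfl⟩)
    · exact ⟨fnotu a ha, fnotB a ha⟩
    · exact ⟨gnotu' b hb, gnotB b hb⟩
  · intro x hxB hxu
    rcases hxB with hm | ⟨b, hb, hadj'⟩
    · exact absurd (mem_cnbhd_singleton.2 (Or.inr (hBadj _ hm).symm)) hxu
    · rcases hb with rfl | hb
      · have hxX : x ∈ X2 := ⟨hadj'.symm, hxu⟩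
        exact ⟨g x, Or.inr ⟨x, hxX, rfl⟩, hg2 x hxX⟩
      · rcases dSet_nbrs (hYD hb) hadj'.symm with h | h
        · exact absurd (mem_cnbhd_singleton.2 (Or.inl h)) hxu
        · exact absurd (mem_cnbhd_singleton.2 (Or.inr h.symm)) hxu
  · intro x hxu hxB
    rcases mem_cnbhd_singleton.1 hxu with rfl | h
    · obtain ⟨y, hy⟩ := hYne
      exact absurd (Or.inr ⟨y, Or.inr hy, dSet_adj (hYD hy)⟩) hxB
    · have hxX : x ∈ X1 := ⟨h.symm, hxB⟩
      exact ⟨f x, Or.inl ⟨x, hxX, rfl⟩, hf2 x hxX⟩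

/-- a vertex of `D(u)` belongs to `L(G)` (given no `C₄`). -/
lemma lSet_of_dSet (h4 : ¬ HasCycleLen G 4) {u v : V} (hv : v ∈ dSet G u) : v ∈ lSet G := by
  have hadj : G.Adj u v := dSet_adj hv
  by_cases hy : ∃ y, G.Adj v y ∧ y ≠ u
  · obtain ⟨y, hvy, hyu⟩ := hy
    have hy2 : G.Adj u y := by
      rcases dSet_nbrs hv hvy with h | h
      · exact absurd h hyu
      · exact h
    by_cases hy' : ∃ y', G.Adj v y' ∧ y' ≠ u ∧ y' ≠ y
    · obtain ⟨y', hvy', hyu', hyy'⟩ := hy'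
      have hy2' : G.Adj u y' := by
        rcases dSet_nbrs hv hvy' with h | h
        · exact absurd h hyu'
        · exact h
      exact absurd (no_c4 h4 hadj.symm.ne (Ne.symm hyy') hvy hy2.symm hvy' hy2'.symm) id
    · push_neg at hy'
      have hNv : G.neighborSet v = {u, y} := by
        ext q
        simp only [SimpleGraph.mem_neighborSet, Set.mem_insert_iff, Set.mem_singleton_iff]
        constructor
        · intro hq
          by_cases hqu : q = u
          · exact Or.inl hqu
          · exact Or.inr (hy' q hq hqu)
        · rintro (rfl | rfl)
          · exact hadj.symm
          · exact hvy
      have huy : u ≠ y := fun h => G.irrefl (h ▸ hy2)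
      refine Or.inr ⟨?_, u, y, hadj.symm, hvy, hy2⟩
      rw [hNv]
      exact Set.ncard_pair huy
  · push_neg at hy
    have hNv : G.neighborSet v = {u} := by
      ext q
      simp only [SimpleGraph.mem_neighborSet, Set.mem_singleton_iff]
      exact ⟨fun hq => hy q hq, fun h => h ▸ hadj.symm⟩
    exact Or.inl (by rw [hNv]; exact Set.ncard_singleton u)

/-- If `D(v) = ∅` and `v ∉ L(G)`, then `D(u)` avoids `N[v]` for every neighbor `u` of `v`. -/
lemma dSet_avoid (h4 : ¬ HasCycleLen G 4) {v u : V} (hadj : G.Adj v u)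
    (hDv : dSet G v = ∅) (hvL : v ∉ lSet G) :
    ∀ d ∈ dSet G u, ¬ G.Adj v d ∧ v ≠ d := by
  intro d hd
  have hdu : G.Adj u d := dSet_adj hd
  have hvd : v ≠ d := by
    rintro rfl
    exact hvL (lSet_of_dSet h4 hd)
  refine ⟨?_, hvd⟩
  intro hvda
  have : d ∈ dSet G v := by
    rw [mem_dSet_iff]
    refine ⟨hvda, fun z hz hdz => ?_⟩
    obtain ⟨hzv, hznadj, -⟩ := n2_elim hz
    rcases dSet_nbrs hd hdz with h | h
    · exact hznadj (h ▸ hadj)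
    · exact no_c4 h4 (Ne.symm hzv) (by intro h'; rw [h'] at hdu; exact G.irrefl hdu) hvda hdz hadj h
  rw [hDv] at this
  exact this

/-- A vertex of `L(G)` adjacent to `v` lies in `D(v)`. -/
lemma lSet_mem_dSet [Fintype V] {v l : V} (hl : l ∈ lSet G) (hadj : G.Adj v l) : l ∈ dSet G v := by
  rw [mem_dSet_iff]
  refine ⟨hadj, fun z hz hlz => ?_⟩
  obtain ⟨hzv, hznadj, -⟩ := n2_elim hz
  rcases hl with h1 | ⟨h2, p, q, hlp, hlq, hpq⟩
  · obtain ⟨a, ha⟩ := Set.ncard_eq_one.1 h1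
    have hva : v = a := by
      have : v ∈ G.neighborSet l := hadj.symm
      rwa [ha, Set.mem_singleton_iff] at this
    have : z ∈ G.neighborSet l := hlz
    rw [ha, Set.mem_singleton_iff] at this
    exact hzv (this.trans hva.symm)
  · have hNl : G.neighborSet l = {p, q} := by
      refine Set.eq_of_subset_of_ncard_le ?_ ?_ (Set.toFinite _) |>.symm
      · intro x hx
        rcases hx with rfl | rfl
        · exact hlp
        · exact hlq
      · rw [h2, Set.ncard_pair hpq.ne]
    have hvmem : v = p ∨ v = q := by
      have : v ∈ G.neighborSet l := hadj.symm
      rwa [hNl] at this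
    have hzmem : z = p ∨ z = q := by
      have : z ∈ G.neighborSet l := hlz
      rwa [hNl] at this
    rcases hvmem with rfl | rfl <;> rcases hzmem with rfl | rfl
    · exact hzv rfl
    · exact hznadj hpq
    · exact hznadj hpq.symm
    · exact hzv rfl

/-- Adjacent vertices of `L(G)` have the same closed neighborhood. -/
lemma lSet_adj_cnbhd [Fintype V] {x y : V} (hx : x ∈ lSet G) (hy : y ∈ lSet G) (hadj : G.Adj x y) :
    cnbhd G {x} = cnbhd G {y} := by
  have key : ∀ a b : V, a ∈ lSet G → G.Adj a b →
      G.neighborSet a = {b} ∨ ∃ c, G.neighborSet a = {b, c} ∧ G.Adj b c ∧ c ≠ b := by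
    intro a b ha hab
    rcases ha with h1 | ⟨h2, p, q, hap, haq, hpq⟩
    · obtain ⟨m, hm⟩ := Set.ncard_eq_one.1 h1
      have : b = m := by
        have : b ∈ G.neighborSet a := hab
        rwa [hm, Set.mem_singleton_iff] at this
      exact Or.inl (this ▸ hm)
    · have hNa : G.neighborSet a = {p, q} := by
        refine Set.eq_of_subset_of_ncard_le ?_ ?_ (Set.toFinite _) |>.symm
        · intro x' hx'
          rcases hx' with rfl | rfl
          · exact hap
          · exact haq
        · rw [h2, Set.ncard_pair hpq.ne]
      have hbmem : b = p ∨ b = q := by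
        have : b ∈ G.neighborSet a := hab
        rwa [hNa] at this
      rcases hbmem with rfl | rfl
      · exact Or.inr ⟨q, hNa, hpq, fun h => hpq.ne h.symm⟩
      · exact Or.inr ⟨p, by rw [hNa, Set.pair_comm], hpq.symm, hpq.ne⟩
  have cnbhd_eq : ∀ a : V, cnbhd G {a} = insert a (G.neighborSet a) := by
    intro a
    ext q
    rw [mem_cnbhd_singleton]
    simp only [Set.mem_insert_iff, SimpleGraph.mem_neighborSet]
    constructor
    · rintro (rfl | h)
      · exact Or.inl rfl
      · exact Or.inr h.symm
    · rintro (rfl | h)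
      · exact Or.inl rfl
      · exact Or.inr h.symm
  rcases key x y hx hadj with hx1 | ⟨c, hx2, hyc, hcy⟩ <;>
    rcases key y x hy hadj.symm with hy1 | ⟨d, hy2, hxd, hdx⟩
  · rw [cnbhd_eq, cnbhd_eq, hx1, hy1]
    ext q; simp only [Set.mem_insert_iff, Set.mem_singleton_iff]; tauto
  · exfalso
    have hd : d ∈ G.neighborSet x := hxd
    rw [hx1, Set.mem_singleton_iff] at hd
    rw [hd] at hy2
    have hyy : y ∈ G.neighborSet y := by rw [hy2]; exact Or.inr rfl
    exact G.irrefl hyy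
  · exfalso
    have hc : c ∈ G.neighborSet y := hyc
    rw [hy1, Set.mem_singleton_iff] at hc
    rw [hc] at hx2
    have hxx : x ∈ G.neighborSet x := by rw [hx2]; exact Or.inr rfl
    exact G.irrefl hxx
  · have hdc : d = c := by
      have : d ∈ G.neighborSet x := hxd
      rw [hx2] at this
      rcases this with h | h
      · exfalso
        rw [h] at hy2
        have hyy : y ∈ G.neighborSet y := by rw [hy2]; exact Or.inr rfl
        exact G.irrefl hyy
      · exact h
    subst hdc
    rw [cnbhd_eq, cnbhd_eq, hx2, hy2]
    ext q
    simp only [Set.mem_insert_iff, Set.mem_singleton_iff]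
    tauto

/-- every subset has a maximal independent subset. -/
lemma exists_isMaxIndepOn [Fintype V] (G : SimpleGraph V) (A : Set V) :
    ∃ Y : Set V, IsMaxIndepOn G A Y := by
  obtain ⟨R, -, hRA, hRind, hRdom⟩ :=
    exists_max_indep_on G A ∅ (Set.pairwise_empty _) (Set.empty_subset _)
  refine ⟨R, hRA, hRind, fun T hTA hTind hRT => ?_⟩
  refine Set.Subset.antisymm (fun t ht => ?_) hRT
  by_contra htR
  obtain ⟨y, hyR, hadj⟩ := hRdom t (hTA ht) htR
  exact hTind ht (hRT hyR) (G.ne_of_adj hadj) hadj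

lemma nonempty_isMaxIndepOn {A Y : Set V} (hY : IsMaxIndepOn G A Y) (hA : A.Nonempty) :
    Y.Nonempty := by
  rcases Set.eq_empty_or_nonempty Y with rfl | h
  · obtain ⟨a, ha⟩ := hA
    have : ({a} : Set V) = ∅ := by
      refine hY.2.2 {a} ?_ ?_ ?_
      · exact Set.singleton_subset_iff.2 ha
      · exact Set.pairwise_singleton a _
      · exact Set.empty_subset _
    exact absurd this (Set.singleton_ne_empty a)
  · exact h

lemma empty_isMaxIndepOn_iff {A : Set V} : IsMaxIndepOn G A ∅ ↔ A = ∅ := by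
  constructor
  · intro h
    by_contra hA
    obtain ⟨a, ha⟩ := Set.nonempty_iff_ne_empty.2 hA
    have : ({a} : Set V) = ∅ :=
      h.2.2 {a} (Set.singleton_subset_iff.2 ha) (Set.pairwise_singleton a _) (Set.empty_subset _)
    exact absurd this (Set.singleton_ne_empty a)
  · rintro rfl
    exact ⟨subset_rfl, Set.pairwise_empty _, fun T hT _ _ => Set.subset_empty_iff.1 hT⟩

/-- getting a weight identity out of a pair of maximal independent sets. -/
lemma wsum_eq_of_witness [Fintype V] {w : V → ℝ} (hwwc : WWC G w) {A B W : Set V}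
    (hdisj : Disjoint W (cnbhd G A ∪ cnbhd G B))
    (h1 : IsMaxIndep G (W ∪ A)) (h2 : IsMaxIndep G (W ∪ B)) :
    wsum w A = wsum w B := by
  have hWA : Disjoint W A :=
    hdisj.mono_right ((subset_cnbhd (G := G)).trans Set.subset_union_left)
  have hWB : Disjoint W B :=
    hdisj.mono_right ((subset_cnbhd (G := G)).trans Set.subset_union_right)
  have heq := hwwc _ _ h1 h2
  rw [wsum_union hWA, wsum_union hWB] at heq
  linarith

lemma D_empty_zero [Fintype V] (hconn : G.Connected) (h4 : ¬ HasCycleLen G 4)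
    (h5 : ¬ HasCycleLen G 5) (h6 : ¬ HasCycleLen G 6) {l0 : V} (hl0 : l0 ∈ lSet G)
    {w : V → ℝ} (hwwc : WWC G w) :
    ∀ d : ℕ, ∀ v, v ∉ lSet G → dSet G v = ∅ → G.dist v l0 ≤ d → w v = 0 := by
  intro d
  induction d with
  | zero =>
    intro v hvL hDv hdist
    exfalso
    have hveq : v = l0 := (hconn.dist_eq_zero_iff).1 (Nat.le_zero.1 hdist)
    exact hvL (hveq ▸ hl0)
  | succ n ih =>
    intro v hvL hDv hdist
    obtain ⟨p, hp⟩ := hconn.exists_walk_length_eq_dist v l0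
    cases p with
    | nil => exact absurd hl0 hvL
    | @cons _ u _ h q =>
      rw [SimpleGraph.Walk.length_cons] at hp
      have hql : G.dist u l0 ≤ n := by
        have h1 : G.dist u l0 ≤ q.length := SimpleGraph.dist_le q
        omega
      have hadj : G.Adj v u := h
      have huL : u ∉ lSet G := by
        intro hu
        have hmem := lSet_mem_dSet hu hadj
        rw [hDv] at hmem
        exact hmem
      by_cases hDu : dSet G u = ∅
      · obtain ⟨W, hdisj, h1, h2⟩ := relating_construction h4 h5 h6 hadj hDv hDu
        have heq : w v = w u := by
          have hw := wsum_eq_of_witness hwwc hdisj h1 h2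
          rwa [wsum_singleton, wsum_singleton] at hw
        rw [heq]
        exact ih u huL hDu hql
      · obtain ⟨Y, hY⟩ := exists_isMaxIndepOn G (dSet G u)
        have hYne : Y.Nonempty :=
          nonempty_isMaxIndepOn hY (Set.nonempty_iff_ne_empty.2 hDu)
        have hYv := dSet_avoid h4 hadj hDv hvL
        obtain ⟨W1, hd1, h11, h12⟩ := star1_construction h4 h5 h6 hadj hDv hY hYne
          (fun y hy => hYv y (hY.1 hy))
        obtain ⟨W2, hd2, h21, h22⟩ := star_construction h4 h5 hY hYne
        have e1 : wsum w {u} = wsum w (insert v Y) := wsum_eq_of_witness hwwc hd1 h11 h12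
        have e2 : wsum w {u} = wsum w Y := wsum_eq_of_witness hwwc hd2 h21 h22
        have hvY : v ∉ Y := fun hv => (hYv v (hY.1 hv)).2 rfl
        rw [wsum_singleton] at e1 e2
        rw [wsum_insert hvY] at e1
        linarith

lemma forward_dir [Fintype V] (hconn : G.Connected) (h4 : ¬ HasCycleLen G 4)
    (h5 : ¬ HasCycleLen G 5) (h6 : ¬ HasCycleLen G 6) (hL : (lSet G).Nonempty)
    {w : V → ℝ} (hwwc : WWC G w) :
    (∀ v, v ∉ lSet G → ∀ M, IsMaxIndepOn G (dSet G v) M → w v = wsum w M) ∧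
    (∀ x y, G.Adj x y → x ∈ lSet G → y ∈ lSet G → w x = w y) := by
  obtain ⟨l0, hl0⟩ := hL
  constructor
  · intro v hvL M hM
    rcases Set.eq_empty_or_nonempty M with rfl | hMne
    · rw [wsum_empty]
      have hDv : dSet G v = ∅ := empty_isMaxIndepOn_iff.1 hM
      exact D_empty_zero hconn h4 h5 h6 hl0 hwwc (G.dist v l0) v hvL hDv le_rfl
    · obtain ⟨W, hdisj, h1, h2⟩ := star_construction h4 h5 hM hMne
      have hw := wsum_eq_of_witness hwwc hdisj h1 h2
      rwa [wsum_singleton] at hw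
  · intro x y hadj hx hy
    have hcn : cnbhd G {x} = cnbhd G {y} := lSet_adj_cnbhd hx hy hadj
    obtain ⟨W, hdisj, h1, h2⟩ :=
      gen_lemma (G := G) (A := {x}) (B := {y}) (P := (∅ : Set V))
        (Set.pairwise_singleton x _) (Set.pairwise_singleton y _) (Set.pairwise_empty _)
        (fun p hp => absurd hp (Set.notMem_empty p))
        (fun q hq hq' => absurd (hcn ▸ hq) hq')
        (fun q hq hq' => absurd (hcn ▸ hq) hq')
    have hw := wsum_eq_of_witness hwwc hdisj h1 h2
    rwa [wsum_singleton, wsum_singleton] at hw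

lemma backward_core [Fintype V] (h4 : ¬ HasCycleLen G 4) {w : V → ℝ}
    (hc1 : ∀ v, v ∉ lSet G → ∀ M, IsMaxIndepOn G (dSet G v) M → w v = wsum w M)
    (hc2 : ∀ x y, G.Adj x y → x ∈ lSet G → y ∈ lSet G → w x = w y)
    {v : V} {M W : Set V} (hS : IsMaxIndep G (W ∪ {v})) (hT : IsMaxIndep G (W ∪ M))
    (hWv : v ∉ W) (hWM : Disjoint W M) (hadjM : ∀ m ∈ M, G.Adj v m) (hMne : M.Nonempty) :
    w v = wsum w M := by
  classical
  have hSind : IsIndep G (W ∪ {v}) := hS.1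
  have hTind : IsIndep G (W ∪ M) := hT.1
  have hMind : IsIndep G M := indep_mono hTind Set.subset_union_right
  have hWnv : ∀ t ∈ W, ¬ G.Adj v t := by
    intro t ht hadj
    exact hSind (Or.inr rfl) (Or.inl ht) hadj.ne hadj
  have hWnM : ∀ t ∈ W, ∀ m ∈ M, ¬ G.Adj t m := by
    intro t ht m hm hadj
    exact hTind (Or.inl ht) (Or.inr hm) hadj.ne hadj
  have hWM' : ∀ t ∈ W, ∀ m ∈ M, t ≠ m := by
    intro t ht m hm h
    exact (Set.disjoint_left.1 hWM) ht (h ▸ hm)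
  have domS : ∀ x, x ∉ W ∪ {v} → ∃ y ∈ W ∪ {v}, G.Adj x y := (isMaxIndep_iff.1 hS).2
  have domT : ∀ x, x ∉ W ∪ M → ∃ y ∈ W ∪ M, G.Adj x y := (isMaxIndep_iff.1 hT).2
  by_cases hvL : v ∈ lSet G
  · -- v ∈ L(G) : M is a singleton
    have hMsing : ∃ m, M = {m} ∧ G.Adj v m := by
      obtain ⟨m0, hm0⟩ := hMne
      rcases hvL with h1 | ⟨h2, p, q, hvp, hvq, hpq⟩
      · obtain ⟨a, ha⟩ := Set.ncard_eq_one.1 h1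
        have hMa : ∀ m ∈ M, m = a := by
          intro m hm
          have hmem : m ∈ G.neighborSet v := hadjM m hm
          rwa [ha, Set.mem_singleton_iff] at hmem
        refine ⟨a, Set.Subset.antisymm (fun m hm => hMa m hm) ?_, ?_⟩
        · intro x hx
          rw [Set.mem_singleton_iff] at hx
          exact hx ▸ (hMa m0 hm0 ▸ hm0)
        · exact (hMa m0 hm0) ▸ hadjM m0 hm0
      · have hNv : G.neighborSet v = {p, q} := by
          refine Set.eq_of_subset_of_ncard_le ?_ ?_ (Set.toFinite _) |>.symm
          · intro x' hx'
            rcases hx' with rfl | rfl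
            · exact hvp
            · exact hvq
          · rw [h2, Set.ncard_pair hpq.ne]
        have hMpq : ∀ m ∈ M, m = p ∨ m = q := by
          intro m hm
          have hmem : m ∈ G.neighborSet v := hadjM m hm
          rwa [hNv] at hmem
        have hnotboth : ¬ (p ∈ M ∧ q ∈ M) := by
          rintro ⟨hp, hq⟩
          exact hMind hp hq hpq.ne hpq
        rcases hMpq m0 hm0 with rfl | rfl
        · refine ⟨m0, Set.Subset.antisymm (fun m hm => ?_) (fun x hx => hx ▸ hm0), hadjM m0 hm0⟩
          rcases hMpq m hm with rfl | rfl
          · rfl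
          · exact absurd ⟨hm0, hm⟩ hnotboth
        · refine ⟨m0, Set.Subset.antisymm (fun m hm => ?_) (fun x hx => hx ▸ hm0), hadjM m0 hm0⟩
          rcases hMpq m hm with rfl | rfl
          · exact absurd ⟨hm, hm0⟩ hnotboth
          · rfl
    obtain ⟨m, rfl, hvm⟩ := hMsing
    rw [wsum_singleton]
    have hmM : m ∈ ({m} : Set V) := rfl
    by_cases hmL : m ∈ lSet G
    · exact hc2 v m hvm hvL hmL
    · have hvDm : v ∈ dSet G m := by
        rw [mem_dSet_iff]
        refine ⟨hvm.symm, fun z hz hvz => ?_⟩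
        obtain ⟨hzm, hznadj, -⟩ := n2_elim hz
        rcases hvL with h1 | ⟨h2, p, q, hvp, hvq, hpq⟩
        · obtain ⟨a, ha⟩ := Set.ncard_eq_one.1 h1
          have hma : m = a := by
            have hmem : m ∈ G.neighborSet v := hvm
            rwa [ha, Set.mem_singleton_iff] at hmem
          have hza : z = a := by
            have hmem : z ∈ G.neighborSet v := hvz
            rwa [ha, Set.mem_singleton_iff] at hmem
          exact hzm (hza.trans hma.symm)
        · have hNv : G.neighborSet v = {p, q} := by
            refine Set.eq_of_subset_of_ncard_le ?_ ?_ (Set.toFinite _) |>.symm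
            · intro x' hx'
              rcases hx' with rfl | rfl
              · exact hvp
              · exact hvq
            · rw [h2, Set.ncard_pair hpq.ne]
          have hmm : m = p ∨ m = q := by
            have hmem : m ∈ G.neighborSet v := hvm
            rwa [hNv] at hmem
          have hzz : z = p ∨ z = q := by
            have hmem : z ∈ G.neighborSet v := hvz
            rwa [hNv] at hmem
          rcases hmm with rfl | rfl <;> rcases hzz with rfl | rfl
          · exact hzm rfl
          · exact hznadj hpq
          · exact hznadj hpq.symm
          · exact hzm rfl
      have hmax : IsMaxIndepOn G (dSet G m) {v} := by
        refine ⟨Set.singleton_subset_iff.2 hvDm, Set.pairwise_singleton v _, ?_⟩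
        intro T hTD hTi hvT
        refine Set.Subset.antisymm (fun t ht => ?_) hvT
        rw [Set.mem_singleton_iff]
        by_contra htv
        have htm : G.Adj m t := dSet_adj (hTD ht)
        have htW : t ∉ W := fun htW' => hWnM t htW' m hmM htm.symm
        have htS : t ∉ W ∪ {v} := by
          rintro (h | h)
          · exact htW h
          · exact htv h
        obtain ⟨s, hs, hadj'⟩ := domS t htS
        rcases hs with hsW | hsv
        · have hsn2 : s ∈ n2 G {m} := by
            refine n2_intro ?_ ?_ htm hadj'
            · intro h; exact hWM' s hsW m hmM h
            · intro h; exact hWnM s hsW m hmM h.symm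
          exact (mem_dSet_iff.1 (hTD ht)).2 s hsn2 hadj'
        · rw [Set.mem_singleton_iff] at hsv
          subst hsv
          exact hTi (hvT rfl) ht (Ne.symm htv) hadj'.symm
      have hkey := hc1 m hmL {v} hmax
      rw [wsum_singleton] at hkey
      exact hkey.symm
  · -- v ∉ L(G)
    have hzOf : ∀ m ∈ M, m ∉ dSet G v → ∃ z, z ∈ n2 G {v} ∧ G.Adj m z :=
      fun m hm hmD => not_mem_dSet (hadjM m hm) hmD
    have hDm_sub : ∀ m ∈ M, m ∉ dSet G v → ∀ x ∈ dSet G m, x ∈ dSet G v ∧ G.Adj v x := by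
      intro m hm hmD x hx
      have hxm : G.Adj m x := dSet_adj hx
      have hxv : x ≠ v := by
        rintro rfl
        exact hvL (lSet_of_dSet h4 hx)
      have hAdjvx : G.Adj v x := by
        by_contra hnadj
        have hxW : x ∉ W := fun hxW' => hWnM x hxW' m hm hxm.symm
        have hxS : x ∉ W ∪ {v} := by
          rintro (h | h)
          · exact hxW h
          · exact hxv h
        obtain ⟨s, hs, hadj'⟩ := domS x hxS
        rcases hs with hsW | hsv
        · have hsn2 : s ∈ n2 G {m} := by
            refine n2_intro ?_ ?_ hxm hadj'
            · intro h; exact hWM' s hsW m hm h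
            · intro h; exact hWnM s hsW m hm h.symm
          exact (mem_dSet_iff.1 hx).2 s hsn2 hadj'
        · rw [Set.mem_singleton_iff] at hsv
          subst hsv
          exact hnadj hadj'.symm
      refine ⟨mem_dSet_iff.2 ⟨hAdjvx, fun e he hxe => ?_⟩, hAdjvx⟩
      obtain ⟨hev, henadj, -⟩ := n2_elim he
      rcases dSet_nbrs hx hxe with h | h
      · exact henadj (h ▸ hadjM m hm)
      · exact no_c4 h4 (Ne.symm hev) hxm.ne' hAdjvx hxe (hadjM m hm) h
    have hDm_unique : ∀ m ∈ M, m ∉ dSet G v → ∀ x ∈ dSet G m, ∀ x' ∈ dSet G m, x = x' := by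
      intro m hm hmD x hx x' hx'
      by_contra hne
      exact no_c4 h4 (hadjM m hm).ne hne (hDm_sub m hm hmD x hx).2 (dSet_adj hx).symm
        (hDm_sub m hm hmD x' hx').2 (dSet_adj hx').symm
    set φ : V → Set V := fun m => if m ∈ dSet G v then {m} else dSet G m with hφ
    have hφ_pos : ∀ m, m ∈ dSet G v → φ m = {m} := by
      intro m hmD; simp only [hφ, if_pos hmD]
    have hφ_neg : ∀ m, m ∉ dSet G v → φ m = dSet G m := by
      intro m hmD; simp only [hφ, if_neg hmD]
    have hφ_cases : ∀ m, ∀ x ∈ φ m,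
        (m ∈ dSet G v ∧ x = m) ∨ (m ∉ dSet G v ∧ x ∈ dSet G m) := by
      intro m x hx
      by_cases hmD : m ∈ dSet G v
      · rw [hφ_pos m hmD] at hx
        exact Or.inl ⟨hmD, hx⟩
      · rw [hφ_neg m hmD] at hx
        exact Or.inr ⟨hmD, hx⟩
    have hφ_subD : ∀ m ∈ M, φ m ⊆ dSet G v := by
      intro m hm x hx
      rcases hφ_cases m x hx with ⟨hmD, rfl⟩ | ⟨hmD, hxD⟩
      · exact hmD
      · exact (hDm_sub m hm hmD x hxD).1
    have hφ_noadj : ∀ m ∈ M, ∀ m' ∈ M, m ≠ m' → ∀ x ∈ φ m, ∀ y ∈ φ m', ¬ G.Adj x y := by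
      intro m hm m' hm' hmm' x hx y hy hadj'
      rcases hφ_cases m x hx with ⟨hmD, rfl⟩ | ⟨hmD, hxD⟩
      · rcases hφ_cases m' y hy with ⟨hmD', rfl⟩ | ⟨hmD', hyD⟩
        · exact hMind hm hm' hmm' hadj'
        · rcases dSet_nbrs hyD hadj'.symm with h | h
          · exact hmm' h
          · exact hMind hm' hm (Ne.symm hmm') h
      · rcases hφ_cases m' y hy with ⟨hmD', rfl⟩ | ⟨hmD', hyD⟩
        · rcases dSet_nbrs hxD hadj' with h | h
          · exact hmm' h.symm
          · exact hMind hm hm' hmm' h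
        · rcases dSet_nbrs hxD hadj' with h | h
          · subst h
            exact hMind hm' hm (Ne.symm hmm') (dSet_adj hyD)
          · rcases dSet_nbrs hyD h.symm with h' | h'
            · exact hmm' h'
            · exact hMind hm' hm (Ne.symm hmm') h'
    have hφ_disj : M.PairwiseDisjoint φ := by
      intro m hm m' hm' hne
      rw [Function.onFun, Set.disjoint_left]
      intro x hx hx'
      rcases hφ_cases m x hx with ⟨hmD, rfl⟩ | ⟨hmD, hxD⟩
      · rcases hφ_cases m' x hx' with ⟨hmD', h⟩ | ⟨hmD', hxD'⟩
        · exact hne h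
        · exact hMind hm' hm (Ne.symm hne) (dSet_adj hxD')
      · rcases hφ_cases m' x hx' with ⟨hmD', h⟩ | ⟨hmD', hxD'⟩
        · subst h
          exact hMind hm hm' hne (dSet_adj hxD)
        · exact no_c4 h4 (hDm_sub m hm hmD x hxD).2.ne hne (hadjM m hm)
            (dSet_adj hxD) (hadjM m' hm') (dSet_adj hxD')
    have hφ_w : ∀ m ∈ M, w m = wsum w (φ m) := by
      intro m hm
      by_cases hmD : m ∈ dSet G v
      · rw [hφ_pos m hmD, wsum_singleton]
      · have hmL : m ∉ lSet G := by
          intro hmL'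
          obtain ⟨z, hz, hmz⟩ := hzOf m hm hmD
          obtain ⟨hzv, hznadj, -⟩ := n2_elim hz
          rcases hmL' with h1 | ⟨h2, p, q, hmp, hmq, hpq⟩
          · obtain ⟨a, ha⟩ := Set.ncard_eq_one.1 h1
            have hva : v = a := by
              have hmem : v ∈ G.neighborSet m := (hadjM m hm).symm
              rwa [ha, Set.mem_singleton_iff] at hmem
            have hza : z = a := by
              have hmem : z ∈ G.neighborSet m := hmz
              rwa [ha, Set.mem_singleton_iff] at hmem
            exact hzv (hza.trans hva.symm)
          · have hNm : G.neighborSet m = {p, q} := by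
              refine Set.eq_of_subset_of_ncard_le ?_ ?_ (Set.toFinite _) |>.symm
              · intro x' hx'
                rcases hx' with rfl | rfl
                · exact hmp
                · exact hmq
              · rw [h2, Set.ncard_pair hpq.ne]
            have hvm' : v = p ∨ v = q := by
              have hmem : v ∈ G.neighborSet m := (hadjM m hm).symm
              rwa [hNm] at hmem
            have hzm' : z = p ∨ z = q := by
              have hmem : z ∈ G.neighborSet m := hmz
              rwa [hNm] at hmem
            rcases hvm' with rfl | rfl <;> rcases hzm' with rfl | rfl
            · exact hzv rfl
            · exact hznadj hpq
            · exact hznadj hpq.symm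
            · exact hzv rfl
        have hself : IsMaxIndepOn G (dSet G m) (dSet G m) := by
          refine ⟨subset_rfl, ?_, fun T hTD _ hDT => Set.Subset.antisymm hTD hDT⟩
          intro x hx y hy hne
          exact absurd (hDm_unique m hm hmD x hx y hy) hne
        rw [hφ_neg m hmD]
        exact hc1 m hmL (dSet G m) hself
    set repl : Set V := ⋃ m ∈ M, φ m with hrepl
    have hreplmax : IsMaxIndepOn G (dSet G v) repl := by
      refine ⟨Set.iUnion₂_subset hφ_subD, ?_, ?_⟩
      · intro x hx y hy hne
        obtain ⟨m, hm, hxφ⟩ := Set.mem_iUnion₂.1 hx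
        obtain ⟨m', hm', hyφ⟩ := Set.mem_iUnion₂.1 hy
        have hmm' : m ≠ m' := by
          rintro rfl
          rcases hφ_cases m x hxφ with ⟨hmD, hxm⟩ | ⟨hmD, hxD⟩
          · rcases hφ_cases m y hyφ with ⟨-, hym⟩ | ⟨hmD', hyD⟩
            · exact hne (hxm.trans hym.symm)
            · exact absurd hmD hmD'
          · rcases hφ_cases m y hyφ with ⟨hmD', hym⟩ | ⟨-, hyD⟩
            · exact absurd hmD' hmD
            · exact hne (hDm_unique m hm hmD x hxD y hyD)
        exact hφ_noadj m hm m' hm' hmm' x hxφ y hyφ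
      · intro T hTD hTi hRT
        refine Set.Subset.antisymm (fun c hc => ?_) hRT
        by_contra hcrepl
        have hcD : c ∈ dSet G v := hTD hc
        have hcM : c ∉ M := by
          intro hcM'
          refine hcrepl (Set.mem_iUnion₂.2 ⟨c, hcM', ?_⟩)
          rw [hφ_pos c hcD]
          rfl
        have hcW : c ∉ W := fun hcW' => hWnv c hcW' (dSet_adj hcD)
        have hcT : c ∉ W ∪ M := by
          rintro (h | h)
          · exact hcW h
          · exact hcM h
        obtain ⟨s, hs, hadj'⟩ := domT c hcT
        rcases hs with hsW | hsM
        · have hsn2 : s ∈ n2 G {v} := by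
            refine n2_intro ?_ ?_ (dSet_adj hcD) hadj'
            · rintro rfl; exact hWv hsW
            · exact hWnv s hsW
          exact (mem_dSet_iff.1 hcD).2 s hsn2 hadj'
        · by_cases hsD : s ∈ dSet G v
          · have hsrepl : s ∈ repl := by
              refine Set.mem_iUnion₂.2 ⟨s, hsM, ?_⟩
              rw [hφ_pos s hsD]
              rfl
            exact hTi hc (hRT hsrepl) (fun h => hcM (h ▸ hsM)) hadj'
          · have hcDs : c ∈ dSet G s := by
              rw [mem_dSet_iff]
              refine ⟨hadj'.symm, fun e he hce => ?_⟩
              obtain ⟨hem, hemn, -⟩ := n2_elim he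
              by_cases hev : e = v
              · subst hev
                exact hemn (hadjM s hsM).symm
              · by_cases heAdj : G.Adj v e
                · exact no_c4 h4 (dSet_adj hcD).ne hem heAdj hce.symm (hadjM s hsM)
                    hadj'.symm
                · have hen2 : e ∈ n2 G {v} := n2_intro hev heAdj (dSet_adj hcD) hce
                  exact (mem_dSet_iff.1 hcD).2 e hen2 hce
            refine hcrepl (Set.mem_iUnion₂.2 ⟨s, hsM, ?_⟩)
            rw [hφ_neg s hsD]
            exact hcDs
    have e0 : w v = wsum w repl := hc1 v hvL repl hreplmax
    have e1 : wsum w repl = ∑ᶠ m ∈ M, wsum w (φ m) := by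
      rw [hrepl]
      exact finsum_mem_biUnion hφ_disj (Set.toFinite M) fun m _ => Set.toFinite (φ m)
    have e3 : wsum w M = ∑ᶠ m ∈ M, wsum w (φ m) := by
      rw [wsum]
      exact finsum_mem_congr rfl hφ_w
    rw [e0, e1, ← e3]

lemma isMaxIndep_of_max_on_univ [Fintype V] {R : Set V}
    (hRind : IsIndep G R) (hdom : ∀ x ∈ (Set.univ : Set V), x ∉ R → ∃ y ∈ R, G.Adj x y) :
    IsMaxIndep G R :=
  isMaxIndep_iff.2 ⟨hRind, fun x hx => hdom x (Set.mem_univ x) hx⟩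

lemma backward_dir [Fintype V] (h4 : ¬ HasCycleLen G 4) {w : V → ℝ}
    (hc1 : ∀ v, v ∉ lSet G → ∀ M, IsMaxIndepOn G (dSet G v) M → w v = wsum w M)
    (hc2 : ∀ x y, G.Adj x y → x ∈ lSet G → y ∈ lSet G → w x = w y) :
    WWC G w := by
  classical
  suffices h : ∀ k : ℕ, ∀ S T : Set V, IsMaxIndep G S → IsMaxIndep G T →
      Fintype.card V - (S ∩ T).ncard ≤ k → wsum w S = wsum w T by
    intro S T hS hT
    exact h (Fintype.card V) S T hS hT (Nat.sub_le _ _)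
  intro k
  induction k using Nat.strong_induction_on with
  | _ k ih =>
  intro S T hS hT hk
  by_cases hST : S ⊆ T
  · rw [hS.2 T hT.1 hST]
  by_cases hTS : T ⊆ S
  · rw [hT.2 S hS.1 hTS]
  obtain ⟨x0, hx0S, hx0T⟩ := Set.not_subset.1 hST
  obtain ⟨y0, hy0T, hy0S⟩ := Set.not_subset.1 hTS
  by_cases hpair : ∃ x ∈ S, x ∉ T ∧ ∃ y ∈ T, y ∉ S ∧ ¬ G.Adj x y
  · obtain ⟨x, hxS, hxT, y, hyT, hyS, hxy⟩ := hpair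
    have hAind : IsIndep G (insert x (insert y (S ∩ T))) := by
      refine isIndep_insert (isIndep_insert (indep_mono hT.1 Set.inter_subset_right) ?_) ?_
      · intro t ht hadj
        exact hT.1 hyT ht.2 (fun h => hyS (h ▸ ht.1)) hadj
      · rintro t (rfl | ht) hadj
        · exact hxy hadj
        · exact hS.1 hxS ht.1 (fun h => hxT (h ▸ ht.2)) hadj
    obtain ⟨U, hAU, -, hUind, hUdom⟩ :=
      exists_max_indep_on G Set.univ _ hAind (Set.subset_univ _)
    have hU : IsMaxIndep G U := isMaxIndep_of_max_on_univ hUind hUdom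
    have hSU : insert x (S ∩ T) ⊆ S ∩ U := by
      rintro t (rfl | ht)
      · exact ⟨hxS, hAU (Set.mem_insert _ _)⟩
      · exact ⟨ht.1, hAU (Set.mem_insert_iff.2 (Or.inr (Set.mem_insert_iff.2 (Or.inr ht))))⟩
    have hTU : insert y (S ∩ T) ⊆ T ∩ U := by
      rintro t (rfl | ht)
      · exact ⟨hyT, hAU (Set.mem_insert_iff.2 (Or.inr (Set.mem_insert _ _)))⟩
      · exact ⟨ht.2, hAU (Set.mem_insert_iff.2 (Or.inr (Set.mem_insert_iff.2 (Or.inr ht))))⟩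
    have hcard1 : (S ∩ T).ncard < (S ∩ U).ncard := by
      have h1 : (insert x (S ∩ T)).ncard = (S ∩ T).ncard + 1 :=
        Set.ncard_insert_of_notMem (fun h => hxT h.2) (Set.toFinite _)
      have h2 : (insert x (S ∩ T)).ncard ≤ (S ∩ U).ncard :=
        Set.ncard_le_ncard hSU (Set.toFinite _)
      omega
    have hcard2 : (S ∩ T).ncard < (T ∩ U).ncard := by
      have h1 : (insert y (S ∩ T)).ncard = (S ∩ T).ncard + 1 :=
        Set.ncard_insert_of_notMem (fun h => hyS h.1) (Set.toFinite _)
      have h2 : (insert y (S ∩ T)).ncard ≤ (T ∩ U).ncard :=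
        Set.ncard_le_ncard hTU (Set.toFinite _)
      omega
    have hbound : ∀ A : Set V, A.ncard ≤ Fintype.card V := by
      intro A
      have := Set.ncard_le_ncard (Set.subset_univ A) Set.finite_univ
      rwa [Set.ncard_univ, Nat.card_eq_fintype_card] at this
    have hm1 : Fintype.card V - (S ∩ U).ncard < k := by
      have := hbound (S ∩ U)
      omega
    have hm2 : Fintype.card V - (T ∩ U).ncard < k := by
      have := hbound (T ∩ U)
      omega
    exact (ih _ hm1 S U hS hU le_rfl).trans (ih _ hm2 T U hT hU le_rfl).symm
  · push_neg at hpair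
    have hadjall : ∀ x ∈ S, x ∉ T → ∀ y ∈ T, y ∉ S → G.Adj x y := fun x hx hxT y hy hyS =>
      hpair x hx hxT y hy hyS
    have hsingle : (∀ x ∈ S, x ∉ T → x = x0) ∨ (∀ y ∈ T, y ∉ S → y = y0) := by
      by_contra hcon
      push_neg at hcon
      obtain ⟨⟨x1, hx1S, hx1T, hx10⟩, ⟨y1, hy1T, hy1S, hy10⟩⟩ := hcon
      exact no_c4 h4 hx10 hy10 (hadjall x1 hx1S hx1T y1 hy1T hy1S)
        (hadjall x0 hx0S hx0T y1 hy1T hy1S).symm (hadjall x1 hx1S hx1T y0 hy0T hy0S)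
        (hadjall x0 hx0S hx0T y0 hy0T hy0S).symm
    have hTeq : T = (S ∩ T) ∪ (T \ S) := by
      ext t; constructor
      · intro ht
        by_cases htS : t ∈ S
        · exact Or.inl ⟨htS, ht⟩
        · exact Or.inr ⟨ht, htS⟩
      · rintro (ht | ht)
        · exact ht.2
        · exact ht.1
    have hSeq' : S = (S ∩ T) ∪ (S \ T) := by
      ext t; constructor
      · intro ht
        by_cases htT : t ∈ T
        · exact Or.inl ⟨ht, htT⟩
        · exact Or.inr ⟨ht, htT⟩
      · rintro (ht | ht)
        · exact ht.1
        · exact ht.1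
    have hdST : Disjoint (S ∩ T) (S \ T) :=
      Set.disjoint_left.2 fun t ht ht' => ht'.2 ht.2
    have hdTS : Disjoint (S ∩ T) (T \ S) :=
      Set.disjoint_left.2 fun t ht ht' => ht'.2 ht.1
    rcases hsingle with hsub | hsub
    · have hSeq : S = (S ∩ T) ∪ {x0} := by
        ext t; constructor
        · intro ht
          by_cases htT : t ∈ T
          · exact Or.inl ⟨ht, htT⟩
          · exact Or.inr (hsub t ht htT)
        · rintro (ht | ht)
          · exact ht.1
          · exact ht ▸ hx0S
      have hcore := backward_core h4 hc1 hc2 (v := x0) (M := T \ S) (W := S ∩ T)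
        (hSeq ▸ hS) (hTeq ▸ hT) (fun h => hx0T h.2) hdTS
        (fun m hm => hadjall x0 hx0S hx0T m hm.1 hm.2) ⟨y0, hy0T, hy0S⟩
      have hdx0 : Disjoint (S ∩ T) ({x0} : Set V) :=
        Set.disjoint_left.2 fun t ht ht' => hx0T (ht' ▸ ht).2
      have eS := congrArg (wsum w) hSeq
      have eT := congrArg (wsum w) hTeq
      rw [wsum_union hdx0, wsum_singleton] at eS
      rw [wsum_union hdTS] at eT
      rw [eS, eT, hcore]
    · have hTeq2 : T = (S ∩ T) ∪ {y0} := by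
        ext t; constructor
        · intro ht
          by_cases htS : t ∈ S
          · exact Or.inl ⟨htS, ht⟩
          · exact Or.inr (hsub t ht htS)
        · rintro (ht | ht)
          · exact ht.2
          · exact ht ▸ hy0T
      have hcore := backward_core h4 hc1 hc2 (v := y0) (M := S \ T) (W := S ∩ T)
        (hTeq2 ▸ hT) (hSeq' ▸ hS) (fun h => hy0S h.1) hdST
        (fun m hm => (hadjall m hm.1 hm.2 y0 hy0T hy0S).symm) ⟨x0, hx0S, hx0T⟩
      have hdy0 : Disjoint (S ∩ T) ({y0} : Set V) :=
        Set.disjoint_left.2 fun t ht ht' => hy0S (ht' ▸ ht).1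
      have eS := congrArg (wsum w) hSeq'
      have eT := congrArg (wsum w) hTeq2
      rw [wsum_union hdST] at eS
      rw [wsum_union hdy0, wsum_singleton] at eT
      rw [eS, eT, hcore]

end Aux

end WC

open WC

/-- in a connected graph with no `C₄`, `C₅`, `C₆` and `L(G) ≠ ∅`,
`G` is `w`-well-covered iff (i) `w(v) = w(M)` for every `v ∉ L(G)` and every
maximal independent set `M` of the subgraph induced by `D(v)`, and
(ii) `w(x) = w(y)` for every edge `xy` with both endpoints in `L(G)`. -/
theorem stmt_12 {V : Type*} [Fintype V] (G : SimpleGraph V) (hconn : G.Connected)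
    (h4 : ¬ HasCycleLen G 4) (h5 : ¬ HasCycleLen G 5) (h6 : ¬ HasCycleLen G 6)
    (hL : (lSet G).Nonempty) (w : V → ℝ) :
    WWC G w ↔
      ((∀ v : V, v ∉ lSet G →
          ∀ M : Set V, IsMaxIndepOn G (dSet G v) M → w v = wsum w M) ∧
       (∀ x y : V, G.Adj x y → x ∈ lSet G → y ∈ lSet G → w x = w y)) := by
  constructor
  · intro hwwc
    exact forward_dir hconn h4 h5 h6 hL hwwc
  · rintro ⟨hc1, hc2⟩
    exact backward_dir h4 hc1 hc2
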